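/- arXiv:2510.25250 — 4 statements merged into one kernel-verified Lean document; each statement's English description precedes it below -/
import Mathlib

section
/- For all integers r ≥ 0 and all n ≥ 0, a_{2^r}(2n+1) ≡ 0 (mod 2^r). -/
/-- `a k n` is the number of partitions of `n` in which even parts appear in a single
color while odd parts may appear in any one of `k` colors; equivalently, it is the
coefficient of `q^n` in `∏_{i ≥ 1} (1 - q^{2i})^{k-1} / ∏_{i ≥ 1} (1 - q^i)^k` over `ℤ`.
Each factor `(1 - q^i)` has constant term `1`, hence is a unit in `ℤ⟦q⟧`, and its
inverse is given by `Ring.inverse`.  Since every factor with index `i > n` is of the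
form `1 + O(q^{n+1})` and so does not affect the coefficient of `q^n`, the infinite
products may be truncated at `i = n + 1`. -/
noncomputable def a (k n : ℕ) : ℤ :=
  PowerSeries.coeff n
    ((∏ i ∈ Finset.range (n + 1),
        ((1 : PowerSeries ℤ) - (PowerSeries.X : PowerSeries ℤ) ^ (2 * (i + 1))) ^ (k - 1)) *
      ∏ i ∈ Finset.range (n + 1),
        (Ring.inverse ((1 : PowerSeries ℤ) - (PowerSeries.X : PowerSeries ℤ) ^ (i + 1))) ^ k)

open PowerSeries Finset

section Aux
variable {R : Type*} [CommRing R]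

/-- The formal inverse of `1 - X^t`. -/
noncomputable def geom (R : Type*) [CommRing R] (t : ℕ) : PowerSeries R :=
  PowerSeries.mk fun n => if t ∣ n then 1 else 0

lemma one_sub_X_pow_mul_geom (t : ℕ) (ht : 0 < t) :
    ((1 : PowerSeries R) - X ^ t) * geom R t = 1 := by
  ext m
  rw [sub_mul, one_mul, map_sub, mul_comm, PowerSeries.coeff_mul_X_pow', geom, coeff_mk,
    PowerSeries.coeff_one]
  rcases Nat.eq_zero_or_pos m with rfl | hm
  · simp [Nat.not_le_of_lt ht]
  · rw [if_neg hm.ne']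
    rcases le_or_gt t m with h | h
    · have hiff : (t ∣ m) ↔ (t ∣ m - t) := by
        constructor
        · exact fun hd => Nat.dvd_sub hd dvd_rfl
        · intro hd
          have : m - t + t = m := Nat.sub_add_cancel h
          exact this ▸ Nat.dvd_add hd dvd_rfl
      rw [if_pos h, coeff_mk]
      simp only [hiff, sub_self]
    · rw [if_neg (Nat.not_le_of_lt h), if_neg (fun hd => absurd (Nat.le_of_dvd hm hd) (Nat.not_le_of_lt h))]
      ring

lemma isUnit_one_sub_X_pow (t : ℕ) (ht : 0 < t) : IsUnit ((1 : PowerSeries R) - X ^ t) :=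
  IsUnit.of_mul_eq_one _ (one_sub_X_pow_mul_geom t ht)

lemma ring_inverse_one_sub_X_pow (t : ℕ) (ht : 0 < t) :
    Ring.inverse ((1 : PowerSeries R) - X ^ t) = geom R t := by
  have hu := isUnit_one_sub_X_pow (R := R) t ht
  have h1 := one_sub_X_pow_mul_geom (R := R) t ht
  have h2 := Ring.inverse_mul_cancel _ hu
  calc Ring.inverse ((1 : PowerSeries R) - X ^ t)
      = Ring.inverse ((1 : PowerSeries R) - X ^ t) * (((1 : PowerSeries R) - X ^ t) * geom R t) := by
        rw [h1, mul_one]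
    _ = geom R t := by rw [← mul_assoc, h2, one_mul]

lemma map_geom {S : Type*} [CommRing S] (f : R →+* S) (t : ℕ) :
    PowerSeries.map f (geom R t) = geom S t := by
  ext m
  rw [PowerSeries.coeff_map, geom, geom, coeff_mk, coeff_mk, apply_ite f, map_one, map_zero]

lemma two_pow_dvd_pow_sub_pow {A B : R} (h : (2 : R) ∣ A - B) (s : ℕ) :
    (2 : R) ^ (s + 1) ∣ A ^ (2 ^ s) - B ^ (2 ^ s) := by
  induction s with
  | zero => simpa using h
  | succ s ih =>
    have h2 : (2 : R) ∣ A ^ (2 ^ s) - B ^ (2 ^ s) :=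
      dvd_trans (dvd_pow_self 2 (Nat.succ_ne_zero s)) ih
    have key : A ^ (2 ^ (s + 1)) - B ^ (2 ^ (s + 1)) =
        (A ^ (2 ^ s) - B ^ (2 ^ s)) * (A ^ (2 ^ s) + B ^ (2 ^ s)) := by
      rw [pow_succ, pow_mul, pow_mul]; ring
    have hsum : (2 : R) ∣ A ^ (2 ^ s) + B ^ (2 ^ s) := by
      have : A ^ (2 ^ s) + B ^ (2 ^ s) = (A ^ (2 ^ s) - B ^ (2 ^ s)) + 2 * B ^ (2 ^ s) := by ring
      rw [this]
      exact dvd_add h2 (dvd_mul_right 2 _)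
    rw [key, pow_succ]
    exact mul_dvd_mul ih hsum

/-- A power series is even if its odd coefficients vanish. -/
def IsEvenPS (f : PowerSeries R) : Prop := ∀ m, Odd m → PowerSeries.coeff m f = 0

lemma IsEvenPS.mul {f g : PowerSeries R} (hf : IsEvenPS f) (hg : IsEvenPS g) :
    IsEvenPS (f * g) := by
  intro m hm
  rw [PowerSeries.coeff_mul]
  refine Finset.sum_eq_zero fun p hp => ?_
  rw [Finset.HasAntidiagonal.mem_antidiagonal] at hp
  rcases Nat.even_or_odd p.1 with h1 | h1
  · have h2 : Odd p.2 := by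
      rcases Nat.even_or_odd p.2 with h2 | h2
      · exact absurd (hp ▸ h1.add h2) (Nat.not_even_iff_odd.mpr hm)
      · exact h2
    rw [hg _ h2, mul_zero]
  · rw [hf _ h1, zero_mul]

lemma IsEvenPS.one : IsEvenPS (1 : PowerSeries R) := by
  intro m hm
  rw [PowerSeries.coeff_one, if_neg]
  rintro rfl
  simp [Nat.odd_iff] at hm

lemma IsEvenPS.pow {f : PowerSeries R} (hf : IsEvenPS f) (k : ℕ) : IsEvenPS (f ^ k) := by
  induction k with
  | zero => simpa using IsEvenPS.one
  | succ k ih => rw [pow_succ]; exact ih.mul hf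

lemma IsEvenPS.one_add_X_pow (m : ℕ) : IsEvenPS ((1 : PowerSeries R) + X ^ (2 * m)) := by
  intro j hj
  rw [map_add, PowerSeries.coeff_one, PowerSeries.coeff_X_pow, if_neg, if_neg, add_zero]
  · rintro rfl
    exact (Nat.not_odd_iff_even.mpr (even_two_mul m)) hj
  · rintro rfl
    simp [Nat.odd_iff] at hj

lemma IsEvenPS.geom_even (m : ℕ) : IsEvenPS (geom R (2 * m)) := by
  intro j hj
  rw [geom, coeff_mk, if_neg]
  intro hd
  exact (Nat.two_dvd_ne_zero.mpr (Nat.odd_iff.mp hj)) ((dvd_mul_right 2 m).trans hd)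

end Aux

section Factor
variable {R : Type*} [CommRing R]

lemma two_pow_series_eq_zero (s : ℕ) (h20 : (2 : R) ^ (s + 1) = 0) :
    (2 : PowerSeries R) ^ (s + 1) = 0 := by
  have h2 : (2 : PowerSeries R) = PowerSeries.C (2 : R) := by
    rw [← map_ofNat (PowerSeries.C (R := R)) 2]
  rw [h2, ← map_pow, h20, map_zero]

lemma factor_eq (s m : ℕ) (hm : 0 < m) (h20 : (2 : R) ^ (s + 1) = 0) :
    ((1 : PowerSeries R) - X ^ (2 * m)) ^ (2 ^ (s + 1) - 1) * (geom R m) ^ (2 ^ (s + 1)) =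
    ((1 : PowerSeries R) + X ^ (2 * m)) ^ (2 ^ s) * geom R (2 * m) := by
  set u : PowerSeries R := 1 - X ^ m with hu
  set v : PowerSeries R := 1 + X ^ m with hv
  set g1 : PowerSeries R := geom R m with hg1def
  set g2 : PowerSeries R := geom R (2 * m) with hg2def
  have huv : u * v = 1 - X ^ (2 * m) := by
    rw [hu, hv, two_mul, pow_add]; ring
  have h1 : u * g1 = 1 := one_sub_X_pow_mul_geom m hm
  have h2 : (1 - X ^ (2 * m)) * g2 = 1 := one_sub_X_pow_mul_geom (2 * m) (by omega)
  have huunit : IsUnit u := IsUnit.of_mul_eq_one _ h1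
  have hg1 : g1 = v * g2 := by
    apply huunit.mul_left_cancel
    rw [h1, ← mul_assoc, huv, h2]
  have hKpos : 0 < 2 ^ (s + 1) := Nat.pow_pos (by norm_num)
  have hK1 : 2 ^ (s + 1) - 1 + 1 = 2 ^ (s + 1) := Nat.succ_pred_eq_of_pos hKpos
  have step : (1 - X ^ (2 * m)) ^ (2 ^ (s + 1) - 1) * g1 ^ (2 ^ (s + 1)) =
      v ^ (2 ^ (s + 1)) * g2 := by
    rw [← huv, ← hK1]
    calc (u * v) ^ (2 ^ (s + 1) - 1) * g1 ^ (2 ^ (s + 1) - 1 + 1)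
        = (u * g1) ^ (2 ^ (s + 1) - 1) * (v ^ (2 ^ (s + 1) - 1) * g1) := by
          rw [mul_pow, mul_pow, pow_succ]; ring
      _ = v ^ (2 ^ (s + 1) - 1) * g1 := by rw [h1, one_pow, one_mul]
      _ = v ^ (2 ^ (s + 1) - 1) * (v * g2) := by rw [← hg1]
      _ = v ^ (2 ^ (s + 1) - 1 + 1) * g2 := by rw [pow_succ]; ring
  have hv2 : v ^ (2 ^ (s + 1)) = ((1 : PowerSeries R) + X ^ (2 * m)) ^ (2 ^ s) := by
    have hexp : 2 ^ (s + 1) = 2 * 2 ^ s := by rw [pow_succ]; ring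
    rw [hexp, pow_mul]
    have hdvd : (2 : PowerSeries R) ∣ v ^ 2 - (1 + X ^ (2 * m)) := by
      refine ⟨X ^ m, ?_⟩
      rw [hv, two_mul m, pow_add]; ring
    obtain ⟨c, hc⟩ := two_pow_dvd_pow_sub_pow hdvd s
    have : (v ^ 2) ^ (2 ^ s) - ((1 : PowerSeries R) + X ^ (2 * m)) ^ (2 ^ s) = 0 := by
      rw [hc, two_pow_series_eq_zero s h20, zero_mul]
    exact sub_eq_zero.mp this
  rw [step, hv2]

end Factor

theorem a_pow_two_odd_cong (r n : ℕ) :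
    ((2 : ℤ) ^ r) ∣ a (2 ^ r) (2 * n + 1) := by
  rcases r with _ | s
  · simpa using one_dvd _
  haveI : NeZero (2 ^ (s + 1)) := ⟨pow_ne_zero _ two_ne_zero⟩
  rw [show ((2 : ℤ) ^ (s + 1)) = ((2 ^ (s + 1) : ℕ) : ℤ) by push_cast; ring,
    ← ZMod.intCast_zmod_eq_zero_iff_dvd]
  have h20 : (2 : ZMod (2 ^ (s + 1))) ^ (s + 1) = 0 := by
    have h := ZMod.natCast_self (2 ^ (s + 1))
    push_cast at h
    exact h
  unfold a
  set N := 2 * n + 1 + 1 with hN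
  have hinv : ∀ i ∈ Finset.range N,
      (Ring.inverse ((1 : PowerSeries ℤ) - X ^ (i + 1))) ^ (2 ^ (s + 1)) =
        (geom ℤ (i + 1)) ^ (2 ^ (s + 1)) := fun i _ => by
    rw [ring_inverse_one_sub_X_pow _ (Nat.succ_pos i)]
  rw [Finset.prod_congr rfl hinv]
  rw [show ∀ x : ℤ, ((x : ℤ) : ZMod (2 ^ (s + 1))) = (Int.castRingHom (ZMod (2 ^ (s + 1)))) x from fun x => rfl,
    ← PowerSeries.coeff_map]
  simp only [map_mul, map_prod, map_pow, map_sub, map_one, PowerSeries.map_X, map_geom]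
  rw [← Finset.prod_mul_distrib,
    Finset.prod_congr rfl (fun i _ => factor_eq s (i + 1) (Nat.succ_pos i) h20)]
  have heven : IsEvenPS (∏ i ∈ Finset.range N,
      ((1 : PowerSeries (ZMod (2 ^ (s + 1)))) + X ^ (2 * (i + 1))) ^ (2 ^ s) * geom (ZMod (2 ^ (s + 1))) (2 * (i + 1))) := by
    refine Finset.prod_induction _ IsEvenPS (fun f g hf hg => hf.mul hg) IsEvenPS.one ?_
    intro i _
    exact ((IsEvenPS.one_add_X_pow (i + 1)).pow (2 ^ s)).mul (IsEvenPS.geom_even (i + 1))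
  exact heven _ ⟨n, by ring⟩
end

section
/- For all integers r ≥ 1 and all n ≥ 0, a_{2r}(2n+1) ≡ 0 (mod 2); that is, for every even positive integer k, a_k(2n+1) is even for all n ≥ 0. -/
open PowerSeries Finset

/-- even-support predicate -/
def ES (f : PowerSeries (ZMod 2)) : Prop := ∀ m : ℕ, Odd m → PowerSeries.coeff m f = 0

lemma ES_one : ES 1 := by
  intro m hm
  have : m ≠ 0 := by rintro rfl; simp [Nat.odd_iff] at hm
  simp [PowerSeries.coeff_one, this]

lemma ES_mul {f g : PowerSeries (ZMod 2)} (hf : ES f) (hg : ES g) : ES (f * g) := by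
  intro m hm
  rw [PowerSeries.coeff_mul]
  apply Finset.sum_eq_zero
  rintro ⟨p, q⟩ hpq
  rw [Finset.HasAntidiagonal.mem_antidiagonal] at hpq
  rcases Nat.even_or_odd p with hp | hp
  · have hq : Odd q := by
      rcases hp with ⟨c, hc⟩; rcases hm with ⟨d, hd⟩; exact ⟨d - c, by omega⟩
    simp [hg q hq]
  · simp [hf p hp]

lemma ES_pow {f : PowerSeries (ZMod 2)} (hf : ES f) (k : ℕ) : ES (f ^ k) := by
  induction k with
  | zero => simpa using ES_one
  | succ k ih => rw [pow_succ]; exact ES_mul ih hf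

lemma ES_base (j : ℕ) : ES ((1 : PowerSeries (ZMod 2)) - PowerSeries.X ^ (2 * j)) := by
  intro m hm
  have h1 : m ≠ 0 := by rintro rfl; simp [Nat.odd_iff] at hm
  have h2 : m ≠ 2 * j := by rcases hm with ⟨d, hd⟩; omega
  simp [PowerSeries.coeff_one, PowerSeries.coeff_X_pow, h1, h2]

lemma ES_inv {f : PowerSeries (ZMod 2)} (h0 : PowerSeries.constantCoeff f = 1)
    (hf : ES f) : ES (Ring.inverse f) := by
  have hu : IsUnit f := by
    rw [PowerSeries.isUnit_iff_constantCoeff, h0]; exact isUnit_one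
  intro m
  induction m using Nat.strong_induction_on with
  | _ m ih =>
    intro hm
    have hm0 : m ≠ 0 := by rintro rfl; simp [Nat.odd_iff] at hm
    have h1 : PowerSeries.coeff m (f * Ring.inverse f) = 0 := by
      rw [Ring.mul_inverse_cancel f hu, PowerSeries.coeff_one]; simp [hm0]
    rw [PowerSeries.coeff_mul, Finset.sum_eq_single ((0 : ℕ), m)] at h1
    · rw [show (PowerSeries.coeff 0) f = 1 by simp [h0], one_mul] at h1
      exact h1
    · rintro ⟨p, q⟩ hpq hne
      rw [Finset.HasAntidiagonal.mem_antidiagonal] at hpq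
      have hp0 : p ≠ 0 := by rintro rfl; simp at hpq; exact hne (by rw [hpq])
      rcases Nat.even_or_odd p with hp | hp
      · have hq : Odd q := by
          rcases hp with ⟨c, hc⟩; rcases hm with ⟨d, hd⟩; exact ⟨d - c, by omega⟩
        have hqm : q < m := by omega
        simp [ih q hqm hq]
      · simp [hf p hp]
    · intro h; exact absurd (Finset.HasAntidiagonal.mem_antidiagonal.mpr (by omega)) h

lemma map_ringInverse (u : PowerSeries ℤ) (hu : IsUnit u) :
    PowerSeries.map (Int.castRingHom (ZMod 2)) (Ring.inverse u) =
      Ring.inverse (PowerSeries.map (Int.castRingHom (ZMod 2)) u) := by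
  have hu2 : IsUnit (PowerSeries.map (Int.castRingHom (ZMod 2)) u) :=
    hu.map (PowerSeries.map (Int.castRingHom (ZMod 2)))
  have h2 : (PowerSeries.map (Int.castRingHom (ZMod 2)) u) *
      PowerSeries.map (Int.castRingHom (ZMod 2)) (Ring.inverse u) = 1 := by
    rw [← map_mul, Ring.mul_inverse_cancel u hu, map_one]
  calc PowerSeries.map (Int.castRingHom (ZMod 2)) (Ring.inverse u)
      = Ring.inverse (PowerSeries.map (Int.castRingHom (ZMod 2)) u) *
        ((PowerSeries.map (Int.castRingHom (ZMod 2)) u) *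
          PowerSeries.map (Int.castRingHom (ZMod 2)) (Ring.inverse u)) := by
        rw [Ring.inverse_mul_cancel_left _ _ hu2]
    _ = Ring.inverse (PowerSeries.map (Int.castRingHom (ZMod 2)) u) := by rw [h2, mul_one]

lemma two_eq_zero : (2 : PowerSeries (ZMod 2)) = 0 := by
  have : (2 : PowerSeries (ZMod 2)) = PowerSeries.C 2 := by
    rw [map_ofNat]
  rw [this, show (2 : ZMod 2) = 0 by decide, map_zero]

lemma sq_sub (j : ℕ) :
    ((1 : PowerSeries (ZMod 2)) - PowerSeries.X ^ j) ^ 2 = 1 - PowerSeries.X ^ (2 * j) := by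
  have h := sub_sq (1 : PowerSeries (ZMod 2)) (PowerSeries.X ^ j)
  have hneg : ∀ x : PowerSeries (ZMod 2), -x = x := fun x => by
    linear_combination (-x) * two_eq_zero
  rw [h, two_eq_zero,
    show (1 : PowerSeries (ZMod 2)) - PowerSeries.X ^ (2 * j) = 1 + PowerSeries.X ^ (2 * j) from
      by rw [sub_eq_add_neg, hneg], ← pow_mul]
  ring

theorem a_even_index_odd_cong (r : ℕ) (hr : 1 ≤ r) (n : ℕ) :
    (2 : ℤ) ∣ a (2 * r) (2 * n + 1) := by
  set N := 2 * n + 1 with hN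
  suffices h : ((a (2 * r) N : ℤ) : ZMod 2) = 0 by
    exact_mod_cast (ZMod.intCast_zmod_eq_zero_iff_dvd (a (2 * r) N) 2).mp h
  have key : ((a (2 * r) N : ℤ) : ZMod 2) =
      PowerSeries.coeff N
        (PowerSeries.map (Int.castRingHom (ZMod 2))
          ((∏ i ∈ Finset.range (N + 1),
              ((1 : PowerSeries ℤ) - PowerSeries.X ^ (2 * (i + 1))) ^ (2 * r - 1)) *
            ∏ i ∈ Finset.range (N + 1),
              (Ring.inverse ((1 : PowerSeries ℤ) - PowerSeries.X ^ (i + 1))) ^ (2 * r))) := by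
    rw [PowerSeries.coeff_map]; rfl
  rw [key, map_mul, map_prod, map_prod]
  have hmap1 : ∀ i ∈ Finset.range (N + 1),
      PowerSeries.map (Int.castRingHom (ZMod 2))
          (((1 : PowerSeries ℤ) - PowerSeries.X ^ (2 * (i + 1))) ^ (2 * r - 1)) =
        ((1 : PowerSeries (ZMod 2)) - PowerSeries.X ^ (2 * (i + 1))) ^ (2 * r - 1) := by
    intro i _
    rw [map_pow, map_sub, map_one, map_pow, PowerSeries.map_X]
  have hu : ∀ i : ℕ, IsUnit ((1 : PowerSeries ℤ) - PowerSeries.X ^ (i + 1)) := by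
    intro i
    rw [PowerSeries.isUnit_iff_constantCoeff]
    simp
  have hmap2 : ∀ i ∈ Finset.range (N + 1),
      PowerSeries.map (Int.castRingHom (ZMod 2))
          ((Ring.inverse ((1 : PowerSeries ℤ) - PowerSeries.X ^ (i + 1))) ^ (2 * r)) =
        (Ring.inverse ((1 : PowerSeries (ZMod 2)) - PowerSeries.X ^ (i + 1))) ^ (2 * r) := by
    intro i _
    rw [map_pow, map_ringInverse _ (hu i), map_sub, map_one, map_pow, PowerSeries.map_X]
  rw [Finset.prod_congr rfl hmap1, Finset.prod_congr rfl hmap2]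
  -- now show ES of the whole product
  have hES : ES ((∏ i ∈ Finset.range (N + 1),
      ((1 : PowerSeries (ZMod 2)) - PowerSeries.X ^ (2 * (i + 1))) ^ (2 * r - 1)) *
      ∏ i ∈ Finset.range (N + 1),
        (Ring.inverse ((1 : PowerSeries (ZMod 2)) - PowerSeries.X ^ (i + 1))) ^ (2 * r)) := by
    apply ES_mul
    · apply Finset.prod_induction _ ES (fun _ _ => ES_mul) ES_one
      intro i _
      exact ES_pow (ES_base (i + 1)) _
    · apply Finset.prod_induction _ ES (fun _ _ => ES_mul) ES_one
      intro i _
      have hpowrw : ((1 : PowerSeries (ZMod 2)) - PowerSeries.X ^ (i + 1)) ^ (2 * r) =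
          ((1 : PowerSeries (ZMod 2)) - PowerSeries.X ^ (2 * (i + 1))) ^ r := by
        rw [pow_mul, sq_sub]
      rw [Ring.inverse_pow, hpowrw, ← Ring.inverse_pow]
      apply ES_pow
      apply ES_inv
      · simp
      · exact ES_base (i + 1)
  exact hES N ⟨n, by omega⟩
end

section
/- For every prime p ∈ {5, 7, 11, 13, 17} and all integers n ≥ 0, a_3(pn + 3) ≡ 0 (mod 2). -/
set_option maxHeartbeats 1000000

section FranklinAux
open Finset PowerSeries

namespace Fr

/-- max of a finset of naturals (0 if empty) -/
def M (S : Finset ℕ) : ℕ := S.sup id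
/-- min (0 if empty, junk) -/
def mn (S : Finset ℕ) : ℕ := WithTop.untopD 0 S.min

lemma le_M {S : Finset ℕ} {x : ℕ} (hx : x ∈ S) : x ≤ M S := Finset.le_sup (f := id) hx

lemma M_mem {S : Finset ℕ} (h : S.Nonempty) : M S ∈ S := by
  obtain ⟨b, hb, he⟩ := Finset.exists_mem_eq_sup S h id
  rw [M, he]; exact hb

lemma mn_eq {S : Finset ℕ} (h : S.Nonempty) : mn S = S.min' h := by
  rw [mn, ← Finset.coe_min' h]; rfl

lemma mn_mem {S : Finset ℕ} (h : S.Nonempty) : mn S ∈ S := by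
  rw [mn_eq h]; exact S.min'_mem h

lemma mn_le {S : Finset ℕ} {x : ℕ} (hx : x ∈ S) : mn S ≤ x := by
  rw [mn_eq ⟨x, hx⟩]; exact Finset.min'_le _ _ hx

/-- start of the maximal "staircase" ending at `M S` -/
def c (S : Finset ℕ) : ℕ :=
  Nat.find (p := fun x => Finset.Icc x (M S) ⊆ S) ⟨M S + 1, by simp⟩

/-- staircase length -/
def sg (S : Finset ℕ) : ℕ := M S + 1 - c S

lemma Icc_c_subset (S : Finset ℕ) : Finset.Icc (c S) (M S) ⊆ S :=
  Nat.find_spec (p := fun x => Finset.Icc x (M S) ⊆ S) ⟨M S + 1, by simp⟩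

lemma c_le_M {S : Finset ℕ} (h : S.Nonempty) : c S ≤ M S := by
  apply Nat.find_le
  intro x hx
  simp only [mem_Icc] at hx
  have : x = M S := le_antisymm hx.2 hx.1
  rw [this]; exact M_mem h

lemma c_min {S : Finset ℕ} {x : ℕ} (hx : x < c S) : ¬ Finset.Icc x (M S) ⊆ S :=
  Nat.find_min (p := fun x => Finset.Icc x (M S) ⊆ S) _ hx

lemma c_pos {S : Finset ℕ} (h0 : 0 ∉ S) (h : S.Nonempty) : 0 < c S := by
  rcases Nat.eq_zero_or_pos (c S) with hc | hc
  · exfalso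
    apply h0
    apply Icc_c_subset S
    simp [hc]
  · exact hc

lemma c_pred_not_mem {S : Finset ℕ} (h0 : 0 ∉ S) (h : S.Nonempty) : c S - 1 ∉ S := by
  intro hmem
  have hc := c_pos h0 h
  apply c_min (S := S) (x := c S - 1) (by omega)
  intro x hx
  simp only [mem_Icc] at hx
  rcases Nat.eq_or_lt_of_le hx.1 with he | hl
  · rw [← he]; exact hmem
  · exact Icc_c_subset S (by simp only [mem_Icc]; omega)

lemma mn_le_c {S : Finset ℕ} (h : S.Nonempty) : mn S ≤ c S :=
  mn_le (Icc_c_subset S (by simp only [mem_Icc]; exact ⟨le_refl _, c_le_M h⟩))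

lemma mn_pos {S : Finset ℕ} (h0 : 0 ∉ S) (h : S.Nonempty) : 0 < mn S := by
  rcases Nat.eq_zero_or_pos (mn S) with hm | hm
  · exact absurd (hm ▸ mn_mem h) h0
  · exact hm


-- Gauss-type helper
lemma two_mul_sum_range (n : ℕ) : 2 * ∑ i ∈ range n, i = n * (n-1) := by
  rw [mul_comm]; exact Finset.sum_range_id_mul_two n

lemma sum_range_add_sum_Icc (a b : ℕ) (h : a ≤ b + 1) :
    (∑ i ∈ range a, i) + ∑ i ∈ Icc a b, i = ∑ i ∈ range (b+1), i := by
  rw [Finset.range_eq_Ico, Finset.range_eq_Ico, ← Finset.Ico_add_one_right_eq_Icc]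
  exact Finset.sum_Ico_consecutive (fun i : ℕ => i) (Nat.zero_le a) h

lemma sum_Icc_shift (a b : ℕ) :
    ∑ i ∈ Icc (a+1) (b+1), i = (∑ i ∈ Icc a b, i) + (b + 1 - a) := by
  have himg : (Icc a b).image (· + 1) = Icc (a+1) (b+1) := by
    ext x; simp only [mem_image, mem_Icc]; constructor
    · rintro ⟨y, hy, rfl⟩; omega
    · intro hx; exact ⟨x - 1, by omega, by omega⟩
  rw [← himg, Finset.sum_image (by intro x _ y _ h; simp only at h; omega),
    Finset.sum_add_distrib, Finset.sum_const, Nat.card_Icc, smul_eq_mul, mul_one]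


lemma S_eq_Icc {S : Finset ℕ} (hne : S.Nonempty) (hmc : mn S = c S) :
    S = Icc (mn S) (M S) :=
  Finset.Subset.antisymm (fun x hx => mem_Icc.2 ⟨mn_le hx, le_M hx⟩)
    (hmc ▸ Icc_c_subset S)

lemma A_collision {S : Finset ℕ} (hne : S.Nonempty) (h0 : 0 ∉ S)
    (hm : mn S ≤ sg S) (hMm : M S < 2 * mn S) :
    ∃ r : ℕ, r * r = 24 * S.sum id + 1 := by
  have h1 : c S ≤ M S := c_le_M hne
  have h2 : mn S ≤ c S := mn_le_c hne
  have h3 : mn S ≤ M S + 1 - c S := hm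
  have hpos : 0 < mn S := mn_pos h0 hne
  have hmc : mn S = c S := by omega
  have hSet := S_eq_Icc hne hmc
  obtain ⟨k, hk⟩ : ∃ k, mn S = k + 1 := ⟨mn S - 1, by omega⟩
  have hM : M S = 2*k + 1 := by omega
  have hsum : S.sum id = ∑ i ∈ Icc (k+1) (2*k+1), i := by
    rw [hSet, hk, hM]; rfl
  refine ⟨6*k+5, ?_⟩
  have e1 := sum_range_add_sum_Icc (k+1) (2*k+1) (by omega)
  have e2 := two_mul_sum_range (k+1)
  have e3 := two_mul_sum_range (2*k+2)
  rw [hsum]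
  simp only [show k + 1 - 1 = k from rfl, show 2*k+2-1 = 2*k+1 from by omega] at e2 e3
  nlinarith [e1, e2, e3]

lemma B_collision {S : Finset ℕ} (hne : S.Nonempty) (h0 : 0 ∉ S)
    (hB : sg S < mn S) (hsc : sg S = c S - 1) :
    ∃ r : ℕ, r * r = 24 * S.sum id + 1 := by
  have h1 : c S ≤ M S := c_le_M hne
  have h2 : mn S ≤ c S := mn_le_c hne
  have hcpos : 0 < c S := c_pos h0 hne
  have hsg : sg S = M S + 1 - c S := rfl
  have hmpos : 0 < mn S := mn_pos h0 hne
  -- sg S < mn S ≤ c S and sg S = c S - 1 forces mn S = c S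
  have hmc : mn S = c S := by omega
  have hSet := S_eq_Icc hne hmc
  -- M S = 2 * c S - 2; c ≥ 2 since otherwise M = 0 ∈ S
  have hM : M S = 2 * (c S) - 2 := by omega
  have hc2 : 2 ≤ c S := by
    by_contra h
    have hc1 : c S = 1 := by omega
    have : M S = 0 := by omega
    exact h0 (this ▸ M_mem hne)
  obtain ⟨k, hk⟩ : ∃ k, c S = k + 2 := ⟨c S - 2, by omega⟩
  have hM' : M S = 2*k + 2 := by omega
  have hsum : S.sum id = ∑ i ∈ Icc (k+2) (2*k+2), i := by
    rw [hSet, hmc, hk, hM']; rfl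
  refine ⟨6*k+7, ?_⟩
  have e1 := sum_range_add_sum_Icc (k+2) (2*k+2) (by omega)
  have e2 := two_mul_sum_range (k+2)
  have e3 := two_mul_sum_range (2*k+3)
  rw [hsum]
  simp only [show k + 2 - 1 = k + 1 from by omega, show 2*k+3-1 = 2*k+2 from by omega] at e2 e3
  nlinarith [e1, e2, e3]


lemma M_le {S : Finset ℕ} {b : ℕ} (h : ∀ x ∈ S, x ≤ b) : M S ≤ b :=
  Finset.sup_le h

/-- Franklin's involution -/
def frank (S : Finset ℕ) : Finset ℕ :=
  if mn S ≤ sg S then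
    ((S.erase (mn S)) \ Icc (M S - mn S + 1) (M S)) ∪ Icc (M S - mn S + 2) (M S + 1)
  else
    ((S \ Icc (c S) (M S)) ∪ Icc (c S - 1) (M S - 1)) ∪ {sg S}

lemma caseA {S : Finset ℕ} (hne : S.Nonempty) (h0 : 0 ∉ S)
    (hm : mn S ≤ sg S) (hMm : 2 * mn S ≤ M S) :
    0 ∉ frank S ∧ (frank S).sum id = S.sum id ∧ frank (frank S) = S ∧ frank S ≠ S := by
  have hMmem := M_mem hne
  have hmn := mn_mem hne
  have hmpos := mn_pos h0 hne
  have h1 : c S ≤ M S := c_le_M hne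
  have hmM : mn S ≤ M S := le_M hmn
  have hsgdef : sg S = M S + 1 - c S := rfl
  have hcle : c S ≤ M S - mn S + 1 := by omega
  have hIccS : Icc (M S - mn S + 1) (M S) ⊆ S := by
    intro x hx
    simp only [mem_Icc] at hx
    exact Icc_c_subset S (mem_Icc.2 ⟨by omega, hx.2⟩)
  set L := (S.erase (mn S)) \ Icc (M S - mn S + 1) (M S) with hLdef
  have hFr : frank S = L ∪ Icc (M S - mn S + 2) (M S + 1) := by
    rw [frank, if_pos hm]
  have hL : ∀ x ∈ L, mn S < x ∧ x ≤ M S - mn S := by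
    intro x hx
    simp only [hLdef, mem_sdiff, mem_erase, mem_Icc, not_and, not_le] at hx
    have h2 := mn_le hx.1.2
    have h3 := le_M hx.1.2
    rcases Nat.lt_or_ge x (M S - mn S + 1) with h4 | h4
    · exact ⟨by omega, by omega⟩
    · exact absurd (hx.2 h4) (by omega)
  have hmem : ∀ x, x ∈ frank S ↔ x ∈ L ∨ (M S - mn S + 2 ≤ x ∧ x ≤ M S + 1) := by
    intro x; rw [hFr]; simp only [mem_union, mem_Icc]
  -- 0 ∉ frank S
  have h0' : 0 ∉ frank S := by
    intro h
    rcases (hmem 0).1 h with h | h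
    · exact absurd (hL 0 h).1 (by omega)
    · omega
  -- decomposition of S
  have hdec : S = L ∪ (Icc (M S - mn S + 1) (M S) ∪ {mn S}) := by
    ext x
    constructor
    · intro hx
      by_cases hxm : x = mn S
      · exact mem_union_right _ (mem_union_right _ (mem_singleton.2 hxm))
      · by_cases hxI : x ∈ Icc (M S - mn S + 1) (M S)
        · exact mem_union_right _ (mem_union_left _ hxI)
        · exact mem_union_left _ (mem_sdiff.2 ⟨mem_erase.2 ⟨hxm, hx⟩, hxI⟩)
    · intro hx
      rcases mem_union.1 hx with h | h
      · exact (Finset.mem_erase.1 (Finset.mem_sdiff.1 h).1).2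
      · rcases mem_union.1 h with h | h
        · exact hIccS h
        · rw [mem_singleton.1 h]; exact hmn
  have dA : Disjoint L (Icc (M S - mn S + 2) (M S + 1)) := by
    rw [Finset.disjoint_left]
    intro a ha hb
    simp only [mem_Icc] at hb
    have := hL a ha
    omega
  have dS1 : Disjoint L (Icc (M S - mn S + 1) (M S) ∪ {mn S}) := by
    rw [Finset.disjoint_left]
    intro a ha hb
    have h2 := hL a ha
    rcases mem_union.1 hb with h | h
    · simp only [mem_Icc] at h; omega
    · rw [mem_singleton.1 h] at h2; omega
  have dS2 : Disjoint (Icc (M S - mn S + 1) (M S)) ({mn S} : Finset ℕ) := by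
    rw [Finset.disjoint_right]
    intro a ha hb
    simp only [mem_Icc] at hb
    rw [mem_singleton.1 ha] at hb
    omega
  -- sums
  have hsum : (frank S).sum id = S.sum id := by
    rw [hFr, Finset.sum_union dA]
    conv_rhs => rw [hdec]
    rw [Finset.sum_union dS1, Finset.sum_union dS2, Finset.sum_singleton]
    have hshift := sum_Icc_shift (M S - mn S + 1) (M S)
    have e1 : M S - mn S + 1 + 1 = M S - mn S + 2 := rfl
    have e2 : M S + 1 - (M S - mn S + 1) = mn S := by omega
    rw [e1, e2] at hshift
    show Finset.sum L id + ∑ i ∈ Icc (M S - mn S + 2) (M S + 1), i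
      = Finset.sum L id + ((∑ i ∈ Icc (M S - mn S + 1) (M S), i) + mn S)
    omega
  -- properties of frank S
  have hM1mem : M S + 1 ∈ frank S := (hmem _).2 (Or.inr ⟨by omega, le_refl _⟩)
  have hne' : (frank S).Nonempty := ⟨_, hM1mem⟩
  have hM' : M (frank S) = M S + 1 := by
    apply le_antisymm
    · apply M_le
      intro x hx
      rcases (hmem x).1 hx with h | h
      · have := (hL x h).2; omega
      · omega
    · exact le_M hM1mem
  have hc' : c (frank S) = M S - mn S + 2 := by
    have hle : c (frank S) ≤ M S - mn S + 2 := by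
      apply Nat.find_le
      rw [hM', hFr]
      exact subset_union_right
    have hgt : ¬ (c (frank S) ≤ M S - mn S + 1) := by
      intro hcon
      have hmm : M S - mn S + 1 ∈ Icc (c (frank S)) (M (frank S)) := by
        simp only [mem_Icc]; rw [hM']; omega
      have := Icc_c_subset (frank S) hmm
      rcases (hmem _).1 this with h | h
      · have := (hL _ h).2; omega
      · omega
    omega
  have hsg' : sg (frank S) = mn S := by
    show M (frank S) + 1 - c (frank S) = mn S
    rw [hM', hc']; omega
  have hmn' : sg (frank S) < mn (frank S) := by
    rw [hsg']
    have := mn_mem hne'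
    rcases (hmem _).1 this with h | h
    · exact (hL _ h).1
    · omega
  -- compute frank (frank S)
  have hff : frank (frank S) = S := by
    rw [frank, if_neg (by omega)]
    rw [hc', hM', hsg']
    have e3 : M S - mn S + 2 - 1 = M S - mn S + 1 := by omega
    have e4 : M S + 1 - 1 = M S := by omega
    rw [e3, e4, hFr]
    rw [Finset.union_sdiff_right, _root_.sdiff_eq_self_iff_disjoint.mpr dA.symm]
    conv_rhs => rw [hdec]
    rw [Finset.union_assoc]
  have hnee : frank S ≠ S := by
    intro heq
    rw [heq] at hM1mem
    have := le_M hM1mem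
    omega
  exact ⟨h0', hsum, hff, hnee⟩


lemma caseB {S : Finset ℕ} (hne : S.Nonempty) (h0 : 0 ∉ S)
    (hB : sg S < mn S) (hsc : sg S + 2 ≤ c S) :
    0 ∉ frank S ∧ (frank S).sum id = S.sum id ∧ frank (frank S) = S ∧ frank S ≠ S := by
  have hMmem := M_mem hne
  have hmn := mn_mem hne
  have hmpos := mn_pos h0 hne
  have h1 : c S ≤ M S := c_le_M hne
  have hmM : mn S ≤ M S := le_M hmn
  have hmc : mn S ≤ c S := mn_le_c hne
  have hcpos : 0 < c S := c_pos h0 hne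
  have hsgdef : sg S = M S + 1 - c S := rfl
  have hsgpos : 1 ≤ sg S := by omega
  have hc2 : 2 ≤ c S := by omega
  have hcnot := c_pred_not_mem h0 hne
  set L := S \ Icc (c S) (M S) with hLdef
  have hFr : frank S = (L ∪ Icc (c S - 1) (M S - 1)) ∪ {sg S} := by
    rw [frank, if_neg (by omega)]
  have hL : ∀ x ∈ L, mn S ≤ x ∧ x ≤ c S - 2 := by
    intro x hx
    simp only [hLdef, mem_sdiff, mem_Icc, not_and, not_le] at hx
    have h2 := mn_le hx.1
    have h3 := le_M hx.1
    have h4 : x < c S := by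
      rcases Nat.lt_or_ge x (c S) with h | h
      · exact h
      · exact absurd (hx.2 h) (by omega)
    have h5 : x ≠ c S - 1 := fun he => hcnot (he ▸ hx.1)
    exact ⟨h2, by omega⟩
  have hmem : ∀ x, x ∈ frank S ↔ (x ∈ L ∨ (c S - 1 ≤ x ∧ x ≤ M S - 1)) ∨ x = sg S := by
    intro x; rw [hFr]; simp only [mem_union, mem_Icc, mem_singleton]
  have h0' : 0 ∉ frank S := by
    intro h
    rcases (hmem 0).1 h with (h | h) | h
    · have := (hL 0 h).1; omega
    · omega
    · omega
  have hdec : S = L ∪ Icc (c S) (M S) := by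
    ext x
    constructor
    · intro hx
      by_cases hxI : x ∈ Icc (c S) (M S)
      · exact mem_union_right _ hxI
      · exact mem_union_left _ (mem_sdiff.2 ⟨hx, hxI⟩)
    · intro hx
      rcases mem_union.1 hx with h | h
      · exact (mem_sdiff.1 h).1
      · exact Icc_c_subset S h
  have dLI : Disjoint L (Icc (c S - 1) (M S - 1)) := by
    rw [Finset.disjoint_left]
    intro a ha hb
    simp only [mem_Icc] at hb
    have := (hL a ha).2
    omega
  have dU : Disjoint (L ∪ Icc (c S - 1) (M S - 1)) ({sg S} : Finset ℕ) := by
    rw [Finset.disjoint_right]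
    intro a ha hb
    rw [mem_singleton.1 ha] at hb
    rcases mem_union.1 hb with h | h
    · have := (hL _ h).1; omega
    · simp only [mem_Icc] at h; omega
  have dS : Disjoint L (Icc (c S) (M S)) := by
    rw [Finset.disjoint_left]
    intro a ha hb
    simp only [mem_Icc] at hb
    have := (hL a ha).2
    omega
  have hsum : (frank S).sum id = S.sum id := by
    rw [hFr, Finset.sum_union dU, Finset.sum_union dLI, Finset.sum_singleton]
    conv_rhs => rw [hdec]
    rw [Finset.sum_union dS]
    have hshift := sum_Icc_shift (c S - 1) (M S - 1)
    have e1 : c S - 1 + 1 = c S := by omega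
    have e2 : M S - 1 + 1 = M S := by omega
    rw [e1, e2] at hshift
    have e3 : M S - (c S - 1) = sg S := by omega
    rw [e3] at hshift
    show (Finset.sum L id + ∑ i ∈ Icc (c S - 1) (M S - 1), i) + sg S
      = Finset.sum L id + ∑ i ∈ Icc (c S) (M S), i
    omega
  have hsgmem : sg S ∈ frank S := (hmem _).2 (Or.inr rfl)
  have hne' : (frank S).Nonempty := ⟨_, hsgmem⟩
  have hM' : M (frank S) = M S - 1 := by
    apply le_antisymm
    · apply M_le
      intro x hx
      rcases (hmem x).1 hx with (h | h) | h
      · have := (hL x h).2; omega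
      · omega
      · omega
    · exact le_M ((hmem _).2 (Or.inl (Or.inr ⟨by omega, le_refl _⟩)))
  have hmn' : mn (frank S) = sg S := by
    apply le_antisymm
    · exact mn_le hsgmem
    · have := mn_mem hne'
      rcases (hmem _).1 this with (h | h) | h
      · have := (hL _ h).1; omega
      · omega
      · omega
  have hc' : c (frank S) ≤ c S - 1 := by
    apply Nat.find_le
    rw [hM', hFr]
    intro x hx
    exact mem_union_left _ (mem_union_right _ hx)
  have hsg' : mn (frank S) ≤ sg (frank S) := by
    have h2 : c (frank S) ≤ M (frank S) := c_le_M hne'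
    have : sg (frank S) = M (frank S) + 1 - c (frank S) := rfl
    rw [hmn', this, hM']
    omega
  have hff : frank (frank S) = S := by
    rw [frank, if_pos hsg', hmn', hM']
    have e4 : M S - 1 - sg S + 1 = c S - 1 := by omega
    have e5 : M S - 1 - sg S + 2 = c S := by omega
    have e6 : M S - 1 + 1 = M S := by omega
    rw [e4, e5, e6]
    have herase : (frank S).erase (sg S) = L ∪ Icc (c S - 1) (M S - 1) := by
      rw [hFr]
      ext x
      simp only [mem_erase, mem_union, mem_singleton]
      constructor
      · rintro ⟨hxne, (h | h)⟩
        · exact h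
        · exact absurd h hxne
      · intro h
        refine ⟨?_, Or.inl h⟩
        rintro rfl
        rcases h with h | h
        · have := (hL _ h).1; omega
        · simp only [mem_Icc] at h; omega
    rw [herase, Finset.union_sdiff_right, _root_.sdiff_eq_self_iff_disjoint.mpr dLI.symm]
    conv_rhs => rw [hdec]
  have hnee : frank S ≠ S := by
    intro heq
    rw [heq] at hsgmem
    have := mn_le hsgmem
    omega
  exact ⟨h0', hsum, hff, hnee⟩


lemma frank_good {S : Finset ℕ} (hne : S.Nonempty) (h0 : 0 ∉ S)
    (hsq : ¬ ∃ r : ℕ, r * r = 24 * S.sum id + 1) :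
    0 ∉ frank S ∧ (frank S).sum id = S.sum id ∧ frank (frank S) = S ∧ frank S ≠ S := by
  rcases le_or_gt (mn S) (sg S) with hm | hB
  · rcases le_or_gt (2 * mn S) (M S) with h | h
    · exact caseA hne h0 hm h
    · exact absurd (A_collision hne h0 hm h) hsq
  · have hmc := mn_le_c hne
    by_cases hsc : sg S = c S - 1
    · exact absurd (B_collision hne h0 hB hsc) hsq
    · have hcpos := c_pos h0 hne
      exact caseB hne h0 hB (by omega)

lemma even_card_invol {α : Type*} [DecidableEq α] (f : α → α) :
    ∀ T : Finset α, (∀ x ∈ T, f x ∈ T) → (∀ x ∈ T, f (f x) = x) →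
      (∀ x ∈ T, f x ≠ x) → Even T.card := by
  intro T
  induction T using Finset.strongInduction with
  | _ T ih =>
    intro h1 h2 h3
    rcases T.eq_empty_or_nonempty with rfl | ⟨x, hx⟩
    · simp
    · have hfx := h1 x hx
      have hxfx : x ≠ f x := (h3 x hx).symm ∘ Eq.symm ∘ Eq.symm
      have hsub : ({x, f x} : Finset α) ⊆ T := by
        intro y hy
        rcases Finset.mem_insert.1 hy with rfl | hy
        · exact hx
        · rw [Finset.mem_singleton.1 hy]; exact hfx
      have hss : T \ {x, f x} ⊂ T := Finset.sdiff_ssubset hsub ⟨x, Finset.mem_insert_self _ _⟩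
      have hmemT' : ∀ y, y ∈ T \ {x, f x} ↔ y ∈ T ∧ y ≠ x ∧ y ≠ f x := by
        intro y
        simp only [mem_sdiff, Finset.mem_insert, Finset.mem_singleton, not_or]
      have heven := ih _ hss ?_ ?_ ?_
      · have hcards : (T \ {x, f x}).card + ({x, f x} : Finset α).card = T.card :=
          Finset.card_sdiff_add_card_eq_card hsub
        have hc2 : ({x, f x} : Finset α).card = 2 := by
          rw [Finset.card_insert_of_notMem (by simpa using hxfx), Finset.card_singleton]
        rw [← hcards, hc2]
        exact heven.add (by decide)
      · intro y hy
        obtain ⟨hyT, hyx, hyfx⟩ := (hmemT' y).1 hy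
        refine (hmemT' _).2 ⟨h1 y hyT, ?_, ?_⟩
        · intro he
          exact hyfx (by rw [← h2 y hyT, he])
        · intro he
          exact hyx (by
            have := congrArg f he
            rw [h2 y hyT, h2 x hx] at this
            exact this)
      · intro y hy
        exact h2 y ((hmemT' y).1 hy).1
      · intro y hy
        exact h3 y ((hmemT' y).1 hy).1

/-- the set of partitions of `n` into distinct (positive) parts -/
def Tn (n : ℕ) : Finset (Finset ℕ) := (Icc 1 n).powerset.filter (fun S => S.sum id = n)

lemma Tn_props {n : ℕ} (hn : 0 < n) {S : Finset ℕ} (hS : S ∈ Tn n) :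
    S.Nonempty ∧ 0 ∉ S ∧ S.sum id = n := by
  rw [Tn, mem_filter, mem_powerset] at hS
  obtain ⟨hsub, hsum⟩ := hS
  refine ⟨?_, ?_, hsum⟩
  · rcases S.eq_empty_or_nonempty with rfl | h
    · rw [Finset.sum_empty] at hsum; omega
    · exact h
  · intro h
    have := hsub h
    simp only [mem_Icc] at this
    omega

lemma mem_Tn_of {n : ℕ} {S : Finset ℕ} (h0 : 0 ∉ S) (hsum : S.sum id = n) :
    S ∈ Tn n := by
  rw [Tn, mem_filter, mem_powerset]
  refine ⟨?_, hsum⟩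
  intro x hx
  simp only [mem_Icc]
  constructor
  · rcases Nat.eq_zero_or_pos x with rfl | h
    · exact absurd hx h0
    · exact h
  · calc x = id x := rfl
      _ ≤ S.sum id := Finset.single_le_sum (fun i _ => Nat.zero_le (id i)) hx
      _ = n := hsum

lemma even_Tn_card {n : ℕ} (hn : 0 < n)
    (hsq : ¬ ∃ r : ℕ, r * r = 24 * n + 1) : Even (Tn n).card := by
  apply even_card_invol frank
  · intro S hS
    obtain ⟨hne, h0, hsum⟩ := Tn_props hn hS
    obtain ⟨h0', hsum', _, _⟩ := frank_good hne h0 (by rw [hsum]; exact hsq)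
    exact mem_Tn_of h0' (by rw [hsum', hsum])
  · intro S hS
    obtain ⟨hne, h0, hsum⟩ := Tn_props hn hS
    exact (frank_good hne h0 (by rw [hsum]; exact hsq)).2.2.1
  · intro S hS
    obtain ⟨hne, h0, hsum⟩ := Tn_props hn hS
    exact (frank_good hne h0 (by rw [hsum]; exact hsq)).2.2.2

lemma two_eq_zero : (2 : (ZMod 2)⟦X⟧) = 0 := by
  have : (2 : (ZMod 2)⟦X⟧) = PowerSeries.C (R := ZMod 2) 2 := by
    rw [← map_ofNat (PowerSeries.C (R := ZMod 2)) 2]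
  rw [this, show (2 : ZMod 2) = 0 by decide, map_zero]

lemma isUnit_one_sub_X_pow (R : Type*) [CommRing R] (j : ℕ) :
    IsUnit ((1 : R⟦X⟧) - X ^ (j+1)) := by
  rw [PowerSeries.isUnit_iff_constantCoeff]
  simp [zero_pow (Nat.succ_ne_zero j)]

lemma sq_one_sub_X_pow (j : ℕ) :
    ((1 : (ZMod 2)⟦X⟧) - X ^ (j+1)) ^ 2 = 1 - X ^ (2*(j+1)) := by
  have h2 := two_eq_zero
  have h3 : ((X : (ZMod 2)⟦X⟧) ^ (j+1))^2 = X ^ (2*(j+1)) := by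
    rw [← pow_mul, mul_comm]
  linear_combination (((X : (ZMod 2)⟦X⟧) ^ (2*(j+1))) - X ^ (j+1)) * h2 + h3

lemma one_sub_eq_one_add (j : ℕ) :
    ((1 : (ZMod 2)⟦X⟧) - X ^ (j+1)) = 1 + X ^ (j+1) := by
  linear_combination (-((X : (ZMod 2)⟦X⟧) ^ (j+1))) * two_eq_zero

/-- coefficient of the finite product of (1+X^{i+1}) counts subsets -/
lemma coeff_prod (N : ℕ) :
    (PowerSeries.coeff (R := ZMod 2) N) (∏ i ∈ range (N+1), ((1 : (ZMod 2)⟦X⟧) + X ^ (i+1)))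
      = (((range (N+1)).powerset.filter (fun t => ∑ i ∈ t, (i+1) = N)).card : ZMod 2) := by
  have h : ∏ i ∈ range (N+1), ((1 : (ZMod 2)⟦X⟧) + X ^ (i+1))
      = ∑ t ∈ (range (N+1)).powerset, X ^ (∑ i ∈ t, (i+1)) := by
    have := Finset.prod_add (fun i => (X : (ZMod 2)⟦X⟧) ^ (i+1)) (fun _ => 1) (range (N+1))
    simp only [add_comm ((1 : (ZMod 2)⟦X⟧)), Finset.prod_const_one, mul_one] at this ⊢
    rw [this]
    exact Finset.sum_congr rfl fun t _ => by rw [Finset.prod_pow_eq_pow_sum]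
  rw [h, map_sum]
  simp only [PowerSeries.coeff_X_pow]
  rw [← Finset.sum_filter]
  rw [Finset.sum_const, nsmul_eq_mul, mul_one]
  congr 2
  apply Finset.filter_congr
  intro t _
  simp [eq_comm]


lemma constCoeff_one_sub (R : Type*) [CommRing R] (j : ℕ) :
    PowerSeries.constantCoeff (R := R) ((1 : R⟦X⟧) - X ^ (j+1)) = 1 := by
  simp [zero_pow (Nat.succ_ne_zero j)]

lemma map_series (N : ℕ) :
    PowerSeries.map (Int.castRingHom (ZMod 2))
      ((∏ i ∈ range (N+1), ((1:ℤ⟦X⟧) - X ^ (2*(i+1))) ^ (3-1)) *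
        ∏ i ∈ range (N+1), (Ring.inverse ((1:ℤ⟦X⟧) - X ^ (i+1))) ^ 3)
      = ∏ i ∈ range (N+1), ((1 : (ZMod 2)⟦X⟧) - X ^ (i+1)) := by
  have key : (∏ i ∈ range (N+1), (Ring.inverse ((1:ℤ⟦X⟧) - X ^ (i+1))) ^ 3) *
      (∏ i ∈ range (N+1), ((1:ℤ⟦X⟧) - X ^ (i+1)) ^ 3) = 1 := by
    rw [← Finset.prod_mul_distrib]
    apply Finset.prod_eq_one
    intro i _
    rw [← mul_pow, Ring.inverse_mul_cancel _ (isUnit_one_sub_X_pow ℤ i), one_pow]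
  set P3 : (ZMod 2)⟦X⟧ := ∏ i ∈ range (N+1), ((1 : (ZMod 2)⟦X⟧) - X ^ (i+1)) ^ 3 with hP3
  have hP3ne : P3 ≠ 0 := by
    intro h
    have : PowerSeries.constantCoeff (R := ZMod 2) P3 = 1 := by
      rw [hP3, map_prod]
      apply Finset.prod_eq_one
      intro i _
      rw [map_pow, constCoeff_one_sub, one_pow]
    rw [h, map_zero] at this
    exact one_ne_zero this.symm
  apply mul_right_cancel₀ hP3ne
  have hmapP3 : PowerSeries.map (Int.castRingHom (ZMod 2))
      (∏ i ∈ range (N+1), ((1:ℤ⟦X⟧) - X ^ (i+1)) ^ 3) = P3 := by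
    rw [hP3]
    simp only [map_prod, map_pow, map_sub, map_one, PowerSeries.map_X]
  calc PowerSeries.map (Int.castRingHom (ZMod 2))
        ((∏ i ∈ range (N+1), ((1:ℤ⟦X⟧) - X ^ (2*(i+1))) ^ (3-1)) *
          ∏ i ∈ range (N+1), (Ring.inverse ((1:ℤ⟦X⟧) - X ^ (i+1))) ^ 3) * P3
      = PowerSeries.map (Int.castRingHom (ZMod 2))
        (((∏ i ∈ range (N+1), ((1:ℤ⟦X⟧) - X ^ (2*(i+1))) ^ (3-1)) *
          ∏ i ∈ range (N+1), (Ring.inverse ((1:ℤ⟦X⟧) - X ^ (i+1))) ^ 3) *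
          ∏ i ∈ range (N+1), ((1:ℤ⟦X⟧) - X ^ (i+1)) ^ 3) := by
        rw [map_mul, map_mul, hmapP3, map_mul]
    _ = PowerSeries.map (Int.castRingHom (ZMod 2))
        (∏ i ∈ range (N+1), ((1:ℤ⟦X⟧) - X ^ (2*(i+1))) ^ (3-1)) := by
        rw [mul_assoc, key, mul_one]
    _ = ∏ i ∈ range (N+1), ((1 : (ZMod 2)⟦X⟧) - X ^ (2*(i+1))) ^ (3-1) := by
        simp only [map_prod, map_pow, map_sub, map_one, PowerSeries.map_X]
    _ = ∏ i ∈ range (N+1), ((1 : (ZMod 2)⟦X⟧) - X ^ (i+1)) ^ 4 := by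
        apply Finset.prod_congr rfl
        intro i _
        rw [← sq_one_sub_X_pow i, ← pow_mul]
    _ = (∏ i ∈ range (N+1), ((1 : (ZMod 2)⟦X⟧) - X ^ (i+1))) * P3 := by
        rw [hP3, ← Finset.prod_mul_distrib]
        apply Finset.prod_congr rfl
        intro i _
        ring

lemma card_subsets_eq_Tn (N : ℕ) :
    ((range (N+1)).powerset.filter (fun t => ∑ i ∈ t, (i+1) = N)).card = (Tn N).card := by
  apply Finset.card_bij (fun t _ => t.image (· + 1))
  · intro t ht
    rw [mem_filter, mem_powerset] at ht
    obtain ⟨hsub, hsum⟩ := ht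
    apply mem_Tn_of
    · intro h
      obtain ⟨x, _, hx0⟩ := Finset.mem_image.1 h
      omega
    · rw [Finset.sum_image (by intro x _ y _ h; simp only at h; omega)]
      exact hsum
  · intro t1 h1 t2 h2 he
    exact Finset.image_injective (f := (· + 1)) (fun a b h => by simpa using h) he
  · intro S hS
    rw [Tn, mem_filter, mem_powerset] at hS
    obtain ⟨hsub, hsum⟩ := hS
    have h1 : ∀ x ∈ S, 1 ≤ x ∧ x ≤ N := by
      intro x hx; have := hsub hx; simpa using this
    refine ⟨S.image (· - 1), ?_, ?_⟩
    · rw [mem_filter, mem_powerset]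
      constructor
      · intro x hx
        obtain ⟨y, hy, rfl⟩ := Finset.mem_image.1 hx
        have := h1 y hy
        simp only [mem_range]
        omega
      · rw [Finset.sum_image (by intro x hx y hy h; have := h1 x hx; have := h1 y hy; simp only at h; omega)]
        rw [← hsum]
        apply Finset.sum_congr rfl
        intro x hx
        have := h1 x hx
        simp only [id]
        omega
    · rw [Finset.image_image]
      have : ∀ x ∈ S, ((· + 1) ∘ (· - 1)) x = id x := by
        intro x hx; have := h1 x hx; simp only [Function.comp, id]; omega
      rw [Finset.image_congr (fun x hx => this x (by simpa using hx)), Finset.image_id]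

end Fr
end FranklinAux

theorem a_three_cong_mod_two_shift_three (p : ℕ)
    (hp : p ∈ ({5, 7, 11, 13, 17} : Finset ℕ)) (n : ℕ) :
    (2 : ℤ) ∣ a 3 (p * n + 3) := by
  simp only [Finset.mem_insert, Finset.mem_singleton] at hp
  set N := p * n + 3 with hN
  have hsq : ¬ ∃ r : ℕ, r * r = 24 * N + 1 := by
    rintro ⟨r, hr⟩
    have h73 : r * r = 24 * n * p + 73 := by rw [hr, hN]; ring
    have hc : (r : ZMod p) * r = 73 := by
      have h := congrArg (Nat.cast : ℕ → ZMod p) h73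
      push_cast at h
      rw [ZMod.natCast_self, mul_zero, zero_add] at h
      exact h
    rcases hp with rfl | rfl | rfl | rfl | rfl
    · revert hc
      generalize (r : ZMod 5) = x
      revert x
      decide
    · revert hc
      generalize (r : ZMod 7) = x
      revert x
      decide
    · revert hc
      generalize (r : ZMod 11) = x
      revert x
      decide
    · revert hc
      generalize (r : ZMod 13) = x
      revert x
      decide
    · revert hc
      generalize (r : ZMod 17) = x
      revert x
      decide
  have heven : Even (Fr.Tn N).card := Fr.even_Tn_card (by omega) hsq
  have h0 : ((a 3 N : ℤ) : ZMod 2) = 0 := by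
    have hcoeff : ((a 3 N : ℤ) : ZMod 2)
        = (PowerSeries.coeff (R := ZMod 2) N) (PowerSeries.map (Int.castRingHom (ZMod 2))
          ((∏ i ∈ Finset.range (N + 1),
              ((1 : PowerSeries ℤ) - (PowerSeries.X : PowerSeries ℤ) ^ (2 * (i + 1))) ^ (3 - 1)) *
            ∏ i ∈ Finset.range (N + 1),
              (Ring.inverse ((1 : PowerSeries ℤ)
                - (PowerSeries.X : PowerSeries ℤ) ^ (i + 1))) ^ 3)) := by
      rw [PowerSeries.coeff_map]
      rfl
    rw [hcoeff, Fr.map_series N]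
    have hprod : ∏ i ∈ Finset.range (N+1), ((1 : PowerSeries (ZMod 2)) - PowerSeries.X ^ (i+1))
        = ∏ i ∈ Finset.range (N+1), ((1 : PowerSeries (ZMod 2)) + PowerSeries.X ^ (i+1)) :=
      Finset.prod_congr rfl fun i _ => Fr.one_sub_eq_one_add i
    rw [hprod, Fr.coeff_prod N, Fr.card_subsets_eq_Tn N]
    rw [ZMod.natCast_eq_zero_iff]
    exact heven.two_dvd
  exact (ZMod.intCast_zmod_eq_zero_iff_dvd _ 2).1 h0
end

section
/- For every integer m ≥ 0 whose residue modulo 7 lies in {2, 4, 5}, the coefficient of q^m in the formal power series ∏_{n≥1} (1 − q^n)^3 over ℤ is even. (Equivalently, reducing Jacobi's identity (q;q)_∞^3 = Σ_{k≥0} (−1)^k (2k+1) q^{k(k+1)/2} modulo 2, every exponent with nonzero coefficient is congruent to 0, 1, 3 or 6 mod 7.) -/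
namespace EulerCubeAux

abbrev F : Type := ZMod 2

local notation "q" => (PowerSeries.X : PowerSeries F)

lemma two_eq_zero : (2 : PowerSeries F) = 0 := by
  rw [← one_add_one_eq_two, ← map_one (PowerSeries.C : F →+* PowerSeries F), ← map_add]
  have : (1 + 1 : F) = 0 := by decide
  rw [this, map_zero]

def T : ℕ → ℕ
  | 0 => 0
  | d+1 => T d + d + 1

lemma two_mul_T (d : ℕ) : 2 * T d = d * (d + 1) := by
  induction d with
  | zero => rfl
  | succ d ih =>
    show 2 * (T d + d + 1) = _
    nlinarith [ih]

def E (n j : ℕ) : ℕ := if n ≤ j then T (j - n) else T (n - j - 1)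

noncomputable def G : ℕ → ℕ → PowerSeries F
  | 0, 0 => 1
  | 0, _+1 => 0
  | _+1, 0 => 1
  | m+1, j+1 => q^(j+1) * G m (j+1) + G m j

lemma G_zero_right (m : ℕ) : G m 0 = 1 := by cases m <;> rfl

lemma G_eq_zero : ∀ {m j : ℕ}, m < j → G m j = 0
  | 0, 0, h => absurd h (by omega)
  | 0, j+1, _ => rfl
  | m+1, 0, h => absurd h (by omega)
  | m+1, j+1, h => by
    show q^(j+1) * G m (j+1) + G m j = 0
    rw [G_eq_zero (by omega), G_eq_zero (by omega : m < j), mul_zero, add_zero]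

lemma G_succ (m j : ℕ) : G (m+1) (j+1) = q^(j+1) * G m (j+1) + G m j := rfl

lemma G_self : ∀ m, G m m = 1
  | 0 => rfl
  | m+1 => by
    rw [G_succ, G_eq_zero (by omega), G_self m, mul_zero, zero_add]

lemma ruleA : ∀ m j : ℕ, G (m+1) (j+1) = G m (j+1) + q^(m - j) * G m j := by
  intro m
  induction m with
  | zero =>
    intro j
    cases j with
    | zero => show q^1 * G 0 1 + G 0 0 = G 0 1 + q^0 * G 0 0; simp [G]
    | succ j =>
      show q^(j+2) * G 0 (j+2) + G 0 (j+1) = G 0 (j+2) + q ^ (0 - (j+1)) * G 0 (j+1)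
      simp [show G 0 (j+2) = 0 from rfl, show G 0 (j+1) = 0 from rfl]
  | succ m ih =>
    intro j
    cases j with
    | zero =>
      have h2 : G (m+1) 1 = q^1 * G m 1 + 1 := by
        simpa [G_zero_right] using G_succ m 0
      have h3 : q^1 * G m 1 + 1 = G m 1 + q^m := by
        rw [← h2]; simpa [G_zero_right] using ih 0
      rw [G_succ, G_zero_right, h2]
      simp only [Nat.sub_zero, mul_one]
      linear_combination (q^1) * h3
    | succ j =>
      by_cases hj : j ≤ m
      · rcases Nat.eq_or_lt_of_le hj with hje | hjl
        · subst hje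
          rw [G_self, G_eq_zero (Nat.lt_succ_self (j+1)), G_self]
          simp
        · obtain ⟨k, hk⟩ : ∃ k, m = j + k + 1 := ⟨m - j - 1, by omega⟩
          subst hk
          have e1 : G (j+k+1+1+1) (j+1+1) = q^(j+2) * G (j+k+2) (j+2) + G (j+k+2) (j+1) :=
            G_succ _ _
          have ihA : G (j+k+2) (j+2) = G (j+k+1) (j+2) + q^k * G (j+k+1) (j+1) := by
            have := ih (j+1)
            rwa [show j+k+1 - (j+1) = k from by omega] at this
          have defA : G (j+k+2) (j+2) = q^(j+2) * G (j+k+1) (j+2) + G (j+k+1) (j+1) :=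
            G_succ _ _
          have ihB : G (j+k+2) (j+1) = G (j+k+1) (j+1) + q^(k+1) * G (j+k+1) j := by
            have := ih j
            rwa [show j+k+1 - j = k+1 from by omega] at this
          have defB : G (j+k+2) (j+1) = q^(j+1) * G (j+k+1) (j+1) + G (j+k+1) j :=
            G_succ _ _
          have hA : G (j+k+1) (j+2) + q^k * G (j+k+1) (j+1)
              = q^(j+2) * G (j+k+1) (j+2) + G (j+k+1) (j+1) := ihA.symm.trans defA
          have hB : G (j+k+1) (j+1) + q^(k+1) * G (j+k+1) j
              = q^(j+1) * G (j+k+1) (j+1) + G (j+k+1) j := ihB.symm.trans defB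
          rw [show j+k+1+1 - (j+1) = k+1 from by omega, e1, ihA, defB]
          linear_combination (-1 : PowerSeries F) * hA - hB
      · rw [G_eq_zero (show m+1+1 < j+1+1 from by omega),
          G_eq_zero (show m+1 < j+1+1 from by omega),
          G_eq_zero (show m+1 < j+1 from by omega)]
        simp

lemma pascal1 (M : ℕ) : G (M+2) 1 = (1 + q^(M+1)) + q * G M 1 := by
  have h1 : G (M+2) 1 = q^1 * G (M+1) 1 + 1 := by
    simpa [G_zero_right] using G_succ (M+1) 0
  have h2 : G (M+1) 1 = G M 1 + q^M := by
    simpa [G_zero_right] using ruleA M 0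
  rw [h1, h2]
  ring

lemma doublePascal (M s : ℕ) :
    G (M+2) (s+2) = (1 + q^(M+1)) * G M (s+1) + q^(s+2) * G M (s+2) + q^(M-s) * G M s := by
  have h1 : G (M+2) (s+2) = q^(s+2) * G (M+1) (s+2) + G (M+1) (s+1) := G_succ _ _
  have h2 : G (M+1) (s+2) = G M (s+2) + q^(M-(s+1)) * G M (s+1) := ruleA M (s+1)
  have h3 : G (M+1) (s+1) = G M (s+1) + q^(M-s) * G M s := ruleA M s
  rw [h1, h2, h3]
  by_cases hs : s < M
  · obtain ⟨k, hk⟩ : ∃ k, M = s + k + 1 := ⟨M - s - 1, by omega⟩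
    subst hk
    rw [show s+k+1 - (s+1) = k from by omega]
    have : q^(s+2) * q^k = q^(s+k+1+1) := by rw [← pow_add]; congr 1; omega
    calc q^(s+2) * (G (s+k+1) (s+2) + q^k * G (s+k+1) (s+1))
          + (G (s+k+1) (s+1) + q^(s+k+1-s) * G (s+k+1) s)
        = q^(s+2) * G (s+k+1) (s+2) + (q^(s+2) * q^k) * G (s+k+1) (s+1)
          + G (s+k+1) (s+1) + q^(s+k+1-s) * G (s+k+1) s := by ring
      _ = _ := by rw [this]; ring
  · have z1 : G M (s+1) = 0 := G_eq_zero (by omega)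
    have z2 : G M (s+2) = 0 := G_eq_zero (by omega)
    rw [z1, z2]
    ring

lemma neighbor_sub (M j : ℕ) :
    G M (j+1) - G M j = q^(j+1) * G M (j+1) - q^(M-j) * G M j := by
  have h := (G_succ M j).symm.trans (ruleA M j)
  linear_combination -h

lemma neighbor_dvd (M j L : ℕ) (h1 : L ≤ j + 1) (h2 : L ≤ M - j) :
    (q^L : PowerSeries F) ∣ (G M (j+1) - G M j) := by
  rw [neighbor_sub]
  exact dvd_sub ((pow_dvd_pow _ h1).mul_right _) ((pow_dvd_pow _ h2).mul_right _)

lemma chain_dvd (M L : ℕ) : ∀ a b : ℕ, a ≤ b →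
    (∀ s, a ≤ s → s < b → L ≤ s + 1 ∧ L ≤ M - s) →
    (q^L : PowerSeries F) ∣ (G M b - G M a) := by
  intro a b
  induction b with
  | zero => intro hab _; interval_cases a; simp
  | succ b ihb =>
    intro hab hcond
    rcases Nat.eq_or_lt_of_le hab with he | hl
    · subst he; simp
    · have hab' : a ≤ b := by omega
      have h1 : (q^L : PowerSeries F) ∣ (G M (b+1) - G M b) := by
        have := hcond b hab' (by omega)
        exact neighbor_dvd M b L this.1 this.2
      have h2 := ihb hab' (fun s hs hs' => hcond s hs (by omega))
      have : G M (b+1) - G M a = (G M (b+1) - G M b) + (G M b - G M a) := by ring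
      rw [this]
      exact dvd_add h1 h2

noncomputable def Qf (r : ℕ) : PowerSeries F := ∏ i ∈ Finset.range r, (1 + q^(i+1))

lemma Qf_succ (r : ℕ) : Qf (r+1) = Qf r * (1 + q^(r+1)) := Finset.prod_range_succ _ _

lemma fund : ∀ m j : ℕ, j ≤ m → Qf j * Qf (m - j) * G m j = Qf m := by
  intro m
  induction m with
  | zero =>
    intro j hj
    interval_cases j
    simp [Qf, G_zero_right]
  | succ m ih =>
    intro j hj
    cases j with
    | zero => simp [Qf, G_zero_right]
    | succ j =>
      rcases Nat.eq_or_lt_of_le hj with he | hl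
      · rw [he]
        simp [G_self, Qf]
      · obtain ⟨k, hk⟩ : ∃ k, m = j + k + 1 := ⟨m - j - 1, by omega⟩
        subst hk
        have IH1 : Qf (j+1) * Qf k * G (j+k+1) (j+1) = Qf (j+k+1) := by
          have := ih (j+1) (by omega)
          rwa [show j+k+1 - (j+1) = k from by omega] at this
        have IH2 : Qf j * Qf (k+1) * G (j+k+1) j = Qf (j+k+1) := by
          have := ih j (by omega)
          rwa [show j+k+1 - j = k+1 from by omega] at this
        rw [show j+k+1+1 - (j+1) = k+1 from by omega, G_succ]
        have hs1 : Qf (j+1) = Qf j * (1+q^(j+1)) := Qf_succ j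
        have hs2 : Qf (k+1) = Qf k * (1+q^(k+1)) := Qf_succ k
        have hs3 : Qf (j+k+1+1) = Qf (j+k+1) * (1+q^(j+k+1+1)) := Qf_succ (j+k+1)
        rw [hs3]
        rw [hs1] at IH1 ⊢
        rw [hs2] at IH2 ⊢
        linear_combination q^(j+1)*(1+q^(k+1))*IH1 + (1+q^(j+1))*IH2
          + (q^(j+1)*Qf (j+k+1))*two_eq_zero

lemma T_succ (d : ℕ) : T (d+1) = T d + d + 1 := rfl

lemma T_ge (d : ℕ) : d ≤ T d := by
  induction d with
  | zero => simp [T]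
  | succ d ih => rw [T_succ]; omega

lemma E_succ_succ (n j : ℕ) : E (n+1) (j+1) = E n j := by
  unfold E
  by_cases h : n ≤ j
  · rw [if_pos (by omega : n+1 ≤ j+1), if_pos h]
    congr 1; omega
  · rw [if_neg (by omega : ¬ n+1 ≤ j+1), if_neg h]
    congr 1; omega

lemma E_succ_zero (n : ℕ) : E (n+1) 0 = T n := by
  unfold E
  rw [if_neg (by omega)]
  have h : n+1-0-1 = n := by omega
  rw [h]

lemma E_zero_zero : E 0 0 = 0 := rfl

lemma E_step (n j : ℕ) : E n (j+1) + n = E n j + (j+1) := by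
  by_cases h1 : n ≤ j
  · unfold E
    rw [if_pos (by omega : n ≤ j+1), if_pos h1,
      show j+1-n = (j-n)+1 from by omega, T_succ]
    omega
  · by_cases h2 : n ≤ j+1
    · unfold E
      rw [if_pos h2, if_neg h1, show j+1-n = 0 from by omega,
        show n-j-1 = 0 from by omega]
      show T 0 + n = T 0 + (j+1)
      omega
    · unfold E
      rw [if_neg h2, if_neg h1, show n-j-1 = (n-(j+1)-1)+1 from by omega, T_succ]
      omega

lemma E_isT (n j : ℕ) : ∃ d, E n j = T d := by
  unfold E
  by_cases h : n ≤ j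
  · exact ⟨j - n, if_pos h⟩
  · exact ⟨n - j - 1, if_neg h⟩

lemma E_ge₁ (n j : ℕ) (h : n+1 ≤ j) : j - (n+1) ≤ E (n+1) j := by
  unfold E
  rw [if_pos h]
  exact T_ge _

lemma E_ge₂ (n j : ℕ) (h : j < n+1) : n - j ≤ E (n+1) j := by
  unfold E
  rw [if_neg (by omega)]
  have := T_ge (n+1-j-1)
  omega

noncomputable def c (N j : ℕ) : PowerSeries F := q^(E N j) * G (2*N) j

lemma c_vanish {N j : ℕ} (h : 2*N < j) : c N j = 0 := by
  rw [c, G_eq_zero h, mul_zero]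

lemma crux (N : ℕ) : ∀ r : ℕ, c (N+1) r
    = c N r * q^N
      + (if 1 ≤ r then c N (r-1) * (1 + q^(2*N+1)) else 0)
      + (if 2 ≤ r then c N (r-2) * q^(N+1) else 0) := by
  have h2N : 2*(N+1) = 2*N+2 := by omega
  intro r
  match r with
  | 0 =>
    simp only [if_neg (by omega : ¬ (1:ℕ) ≤ 0), if_neg (by omega : ¬ (2:ℕ) ≤ 0), add_zero]
    rw [c, c, h2N, G_zero_right, G_zero_right, mul_one, mul_one, ← pow_add]
    cases N with
    | zero => rfl
    | succ M =>
      have hT : T (M+1) = T M + (M+1) := by rw [T_succ]; omega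
      rw [E_succ_zero, E_succ_zero, hT]
  | 1 =>
    rw [if_pos (le_refl 1), if_neg (by omega : ¬ (2:ℕ) ≤ 1), add_zero]
    have hp := pascal1 (2*N)
    rw [c, c, c, h2N, E_succ_succ, hp, G_zero_right, mul_one]
    have he : E N 1 + N = E N 0 + 1 := E_step N 0
    have hq : q^(E N 1) * q^N = q^(E N 0) * q^1 := by
      rw [← pow_add, ← pow_add, he]
    have hq' : q^(E N 1) * q^N = q^(E N 0) * q := by rw [hq, pow_one]
    linear_combination (-(G (2*N) 1)) * hq'
  | (s+2) =>
    rw [if_pos (by omega : 1 ≤ s+2), if_pos (by omega : 2 ≤ s+2),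
      show s+2-1 = s+1 from rfl, show s+2-2 = s from rfl]
    have hd := doublePascal (2*N) s
    rw [c, c, c, c, h2N, E_succ_succ, hd]
    by_cases hs : s ≤ 2*N
    · have he1 : E N (s+2) + N = E N (s+1) + (s+2) := E_step N (s+1)
      have he2 : E N (s+1) + N = E N s + (s+1) := E_step N s
      have hq1 : q^(E N (s+1)) * q^(s+2) = q^(E N (s+2)) * q^N := by
        rw [← pow_add, ← pow_add]; congr 1; omega
      have hq2 : q^(E N (s+1)) * q^(2*N - s) = q^(E N s) * q^(N+1) := by
        rw [← pow_add, ← pow_add]; congr 1; omega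
      linear_combination (G (2*N) (s+2)) * hq1 + (G (2*N) s) * hq2
    · rw [G_eq_zero (by omega : 2*N < s), G_eq_zero (by omega : 2*N < s+1),
        G_eq_zero (by omega : 2*N < s+2)]
      ring

lemma sum_coeff (f : ℕ → PowerSeries F) (L t : ℕ) :
    (∑ j ∈ Finset.range L, Polynomial.C (f j) * Polynomial.X ^ j).coeff t
      = if t < L then f t else 0 := by
  rw [Polynomial.finset_sum_coeff]
  simp only [Polynomial.coeff_C_mul, Polynomial.coeff_X_pow, mul_ite, mul_one, mul_zero]
  rw [Finset.sum_ite_eq (Finset.range L) t f]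
  simp [Finset.mem_range]

lemma mainI : ∀ N : ℕ,
    (∏ i ∈ Finset.range N, (1 + Polynomial.C (q^(i+1)) * Polynomial.X))
      * (∏ i ∈ Finset.range N, (Polynomial.X + Polynomial.C (q^i)))
    = ∑ j ∈ Finset.range (2*N+1), Polynomial.C (c N j) * Polynomial.X ^ j := by
  intro N
  induction N with
  | zero => simp [c, E_zero_zero, G_zero_right]
  | succ N ih =>
    have hq : q^(N+1) * q^N = q^(2*N+1) := by rw [← pow_add]; congr 1; omega
    have hB : (1 + Polynomial.C (q^(N+1)) * Polynomial.X)
        * (Polynomial.X + Polynomial.C (q^N))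
        = Polynomial.C (q^N) + Polynomial.C (1 + q^(2*N+1)) * Polynomial.X ^ 1
          + Polynomial.C (q^(N+1)) * Polynomial.X ^ 2 := by
      rw [← hq, map_add, map_one, map_mul]
      ring
    rw [Finset.prod_range_succ, Finset.prod_range_succ, mul_mul_mul_comm, ih, hB]
    have hRc : ∀ t, (∑ j ∈ Finset.range (2*(N+1)+1),
        Polynomial.C (c (N+1) j) * Polynomial.X ^ j).coeff t = c (N+1) t := by
      intro t
      rw [sum_coeff]
      split
      · rfl
      · next h => exact (c_vanish (by omega)).symm
    have hSc : ∀ t, (∑ j ∈ Finset.range (2*N+1),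
        Polynomial.C (c N j) * Polynomial.X ^ j).coeff t = c N t := by
      intro t
      rw [sum_coeff]
      split
      · rfl
      · next h => exact (c_vanish (by omega)).symm
    apply Polynomial.ext
    intro r
    rw [hRc]
    rw [mul_add, mul_add, ← mul_assoc, ← mul_assoc]
    simp only [Polynomial.coeff_add, Polynomial.coeff_mul_C, Polynomial.coeff_mul_X_pow']
    simp only [hSc]
    exact (crux N r).symm

lemma one_add_one_eq_zero : (1 : PowerSeries F) + 1 = 0 := by
  rw [one_add_one_eq_two]; exact two_eq_zero

lemma star (K : ℕ) : Qf (K+1) * Qf K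
    = ∑ j ∈ Finset.range (2*(K+1)+1), (j : PowerSeries F) * c (K+1) j := by
  have hm := mainI (K+1)
  have hsplit : (∏ i ∈ Finset.range (K+1), (Polynomial.X + Polynomial.C (q^i)))
      = (∏ i ∈ Finset.range K, (Polynomial.X + Polynomial.C (q^(i+1))))
        * (Polynomial.X + 1) := by
    rw [Finset.prod_range_succ']
    norm_num
  rw [hsplit] at hm
  set A := ∏ i ∈ Finset.range (K+1), (1 + Polynomial.C (q^(i+1)) * Polynomial.X) with hA
  set B := ∏ i ∈ Finset.range K, (Polynomial.X + Polynomial.C (q^(i+1))) with hB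
  set S := ∑ j ∈ Finset.range (2*(K+1)+1), Polynomial.C (c (K+1) j) * Polynomial.X ^ j
    with hS
  have hm' : (A * B) * (Polynomial.X + 1) = S := by rw [← hm]; ring
  have hd := congrArg
    (fun p : Polynomial (PowerSeries F) => Polynomial.eval 1 (Polynomial.derivative p)) hm'
  have e1 : Polynomial.eval (1 : PowerSeries F)
      (Polynomial.derivative ((A * B) * (Polynomial.X + 1)))
      = Polynomial.eval 1 (A * B) := by
    rw [Polynomial.derivative_mul, Polynomial.derivative_add, Polynomial.derivative_X,
      Polynomial.derivative_one, add_zero, mul_one, Polynomial.eval_add,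
      Polynomial.eval_mul, Polynomial.eval_add, Polynomial.eval_X, Polynomial.eval_one,
      one_add_one_eq_zero, mul_zero, zero_add]
  have e2 : Polynomial.eval (1 : PowerSeries F) (A * B) = Qf (K+1) * Qf K := by
    rw [Polynomial.eval_mul, hA, hB, Polynomial.eval_prod, Polynomial.eval_prod]
    unfold Qf
    congr 1
    · exact Finset.prod_congr rfl (fun i _ => by simp)
    · exact Finset.prod_congr rfl (fun i _ => by simp [add_comm])
  have e3 : Polynomial.eval (1 : PowerSeries F) (Polynomial.derivative S)
      = ∑ j ∈ Finset.range (2*(K+1)+1), (j : PowerSeries F) * c (K+1) j := by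
    rw [hS, map_sum, Polynomial.eval_finset_sum]
    refine Finset.sum_congr rfl (fun j _ => ?_)
    rw [Polynomial.derivative_C_mul, Polynomial.derivative_X_pow,
      Polynomial.eval_mul, Polynomial.eval_C, Polynomial.eval_mul, Polynomial.eval_C,
      Polynomial.eval_pow, Polynomial.eval_X, one_pow, mul_one]
    ring
  rw [e1, e2, e3] at hd
  exact hd

lemma coeff_zero_of_dvd {m : ℕ} {f : PowerSeries F}
    (h : (q^(m+1) : PowerSeries F) ∣ f) : PowerSeries.coeff m f = 0 :=
  PowerSeries.X_pow_dvd_iff.mp h m (lt_add_one m)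

lemma prod_tail_dvd (L a : ℕ) (h : L ≤ a+1) :
    ∀ b : ℕ, (q^L : PowerSeries F) ∣ (∏ i ∈ Finset.range b, (1 + q^(a+i+1))) - 1 := by
  intro b
  induction b with
  | zero => simp
  | succ b ih =>
    rw [Finset.prod_range_succ]
    have hre : (∏ i ∈ Finset.range b, (1 + q^(a+i+1))) * (1 + q^(a+b+1)) - 1
        = ((∏ i ∈ Finset.range b, (1 + q^(a+i+1))) - 1) * (1 + q^(a+b+1)) + q^(a+b+1) := by
      ring
    rw [hre]
    exact dvd_add (ih.mul_right _) (pow_dvd_pow _ (by omega))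

lemma dvd_mul_sub_one {L : ℕ} {a b : PowerSeries F}
    (ha : (q^L : PowerSeries F) ∣ a - 1) (hb : (q^L : PowerSeries F) ∣ b - 1) :
    (q^L : PowerSeries F) ∣ a * b - 1 := by
  have : a * b - 1 = (a - 1) * b + (b - 1) := by ring
  rw [this]
  exact dvd_add (ha.mul_right _) hb

lemma coeff_mul_stable {m : ℕ} (A W : PowerSeries F)
    (h : (q^(m+1) : PowerSeries F) ∣ W - 1) :
    PowerSeries.coeff m (A * W) = PowerSeries.coeff m A := by
  have h1 : A * W - A = A * (W - 1) := by ring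
  have h2 : (q^(m+1) : PowerSeries F) ∣ A * W - A := h1 ▸ h.mul_left A
  have h3 := coeff_zero_of_dvd h2
  rw [map_sub, sub_eq_zero] at h3
  exact h3

lemma Qf_add (a b : ℕ) :
    Qf (a+b) = Qf a * ∏ i ∈ Finset.range b, (1 + q^(a+i+1)) := by
  unfold Qf
  rw [Finset.prod_range_add]

lemma Qf_ne_zero (r : ℕ) : Qf r ≠ 0 := by
  intro h
  have : PowerSeries.constantCoeff (Qf r) = 1 := by
    unfold Qf
    rw [map_prod]
    refine Finset.prod_eq_one (fun i _ => ?_)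
    rw [map_add, map_one, map_pow, PowerSeries.constantCoeff_X]
    simp
  rw [h, map_zero] at this
  exact one_ne_zero this.symm

lemma GQf (K : ℕ) : G (2*K+2) (K+1) * Qf (K+1)
    = ∏ i ∈ Finset.range (K+1), (1 + q^(K+1+i+1)) := by
  have hf := fund (2*K+2) (K+1) (by omega)
  rw [show 2*K+2 - (K+1) = K+1 from by omega] at hf
  have hq : Qf (2*K+2) = Qf (K+1) * ∏ i ∈ Finset.range (K+1), (1 + q^(K+1+i+1)) := by
    have h := Qf_add (K+1) (K+1)
    rwa [show K+1+(K+1) = 2*K+2 from by omega] at h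
  apply mul_left_cancel₀ (Qf_ne_zero (K+1))
  rw [← hq, ← hf]
  ring

lemma G_mid_congr (m : ℕ) (j : ℕ) (hj : E (2*m+2+1) j ≤ m) :
    (q^(m+1) : PowerSeries F) ∣ G (2*(2*m+2)+2) j - G (2*(2*m+2)+2) (2*m+2+1) := by
  set K := 2*m+2 with hK
  by_cases hjle : j ≤ K+1
  · have hjge : K - m ≤ j := by
      rcases Nat.eq_or_lt_of_le hjle with he | hl
      · omega
      · have := E_ge₂ K j hl
        omega
    have := chain_dvd (2*K+2) (m+1) j (K+1) hjle (fun s hs hs' => by constructor <;> omega)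
    have h2 : G (2*K+2) j - G (2*K+2) (K+1) = -(G (2*K+2) (K+1) - G (2*K+2) j) := by ring
    rw [h2]
    exact this.neg_right
  · have hjle' : j ≤ K+1+m := by
      have := E_ge₁ K j (by omega)
      omega
    exact chain_dvd (2*K+2) (m+1) (K+1) j (by omega) (fun s hs hs' => by constructor <;> omega)

lemma term_coeff (m j : ℕ) :
    PowerSeries.coeff m (c (2*m+2+1) j * Qf (2*m+2+1))
      = (if E (2*m+2+1) j = m then 1 else 0) := by
  have hc : c (2*m+2+1) j = q^(E (2*m+2+1) j) * G (2*(2*m+2)+2) j := by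
    rw [c, show 2*(2*m+2+1) = 2*(2*m+2)+2 from by omega]
  by_cases hj : E (2*m+2+1) j ≤ m
  · have hdvd := G_mid_congr m j hj
    have hGQf := GQf (2*m+2)
    have hsplit : c (2*m+2+1) j * Qf (2*m+2+1)
        = q^(E (2*m+2+1) j) * (G (2*(2*m+2)+2) (2*m+2+1) * Qf (2*m+2+1))
          + q^(E (2*m+2+1) j)
            * ((G (2*(2*m+2)+2) j - G (2*(2*m+2)+2) (2*m+2+1)) * Qf (2*m+2+1)) := by
      rw [hc]; ring
    rw [hsplit, map_add]
    have hz : PowerSeries.coeff m (q^(E (2*m+2+1) j)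
        * ((G (2*(2*m+2)+2) j - G (2*(2*m+2)+2) (2*m+2+1)) * Qf (2*m+2+1))) = 0 :=
      coeff_zero_of_dvd ((hdvd.mul_right _).mul_left _)
    rw [hz, add_zero, hGQf]
    have hW : (q^(m+1) : PowerSeries F)
        ∣ (∏ i ∈ Finset.range (2*m+2+1), (1 + q^(2*m+2+1+i+1))) - 1 :=
      prod_tail_dvd (m+1) (2*m+2+1) (by omega) (2*m+2+1)
    rw [coeff_mul_stable _ _ hW, PowerSeries.coeff_X_pow]
    simp [eq_comm]
  · have hne : ¬ (E (2*m+2+1) j = m) := by omega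
    rw [if_neg hne]
    apply coeff_zero_of_dvd
    rw [hc]
    have hd : (q^(m+1) : PowerSeries F) ∣ q^(E (2*m+2+1) j) :=
      pow_dvd_pow _ (by omega)
    exact (hd.mul_right _).mul_right _

lemma key (m : ℕ) (hm7 : ∀ d, T d ≠ m) :
    PowerSeries.coeff m ((Qf (m+1))^3) = 0 := by
  have hstar := star (2*m+2)
  have h := congrArg (fun y : PowerSeries F => y * Qf (2*m+2+1)) hstar
  have hL : PowerSeries.coeff m (Qf (2*m+2+1) * Qf (2*m+2) * Qf (2*m+2+1))
      = PowerSeries.coeff m ((Qf (m+1))^3) := by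
    have hA : Qf (2*m+2+1) = Qf (m+1) * ∏ i ∈ Finset.range (m+2), (1 + q^(m+1+i+1)) := by
      have := Qf_add (m+1) (m+2)
      rwa [show m+1+(m+2) = 2*m+2+1 from by omega] at this
    have hB : Qf (2*m+2) = Qf (m+1) * ∏ i ∈ Finset.range (m+1), (1 + q^(m+1+i+1)) := by
      have := Qf_add (m+1) (m+1)
      rwa [show m+1+(m+1) = 2*m+2 from by omega] at this
    have hWA := prod_tail_dvd (m+1) (m+1) (by omega) (m+2)
    have hWB := prod_tail_dvd (m+1) (m+1) (by omega) (m+1)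
    have hre : Qf (2*m+2+1) * Qf (2*m+2) * Qf (2*m+2+1)
        = (Qf (m+1))^3 *
          ((∏ i ∈ Finset.range (m+2), (1 + q^(m+1+i+1)))
            * ((∏ i ∈ Finset.range (m+1), (1 + q^(m+1+i+1)))
              * (∏ i ∈ Finset.range (m+2), (1 + q^(m+1+i+1))))) := by
      rw [hA, hB]; ring
    rw [hre, coeff_mul_stable _ _ (dvd_mul_sub_one hWA (dvd_mul_sub_one hWB hWA))]
  have hR : PowerSeries.coeff m
      ((∑ j ∈ Finset.range (2*(2*m+2+1)+1), (j : PowerSeries F) * c (2*m+2+1) j)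
        * Qf (2*m+2+1)) = 0 := by
    rw [Finset.sum_mul, map_sum]
    refine Finset.sum_eq_zero (fun j _ => ?_)
    have hcast : (j : PowerSeries F) * c (2*m+2+1) j * Qf (2*m+2+1)
        = (j : ℕ) • (c (2*m+2+1) j * Qf (2*m+2+1)) := by
      rw [nsmul_eq_mul]
      ring
    rw [hcast, map_nsmul, term_coeff]
    obtain ⟨d, hd⟩ := E_isT (2*m+2+1) j
    rw [hd, if_neg (hm7 d)]
    simp
  rw [← hL, h]
  exact hR

lemma T_ne_of_mod7 (m : ℕ) (hm : m % 7 = 2 ∨ m % 7 = 4 ∨ m % 7 = 5) :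
    ∀ d, T d ≠ m := by
  intro d heq
  have h2 : d * (d+1) = 2 * m := by rw [← two_mul_T, heq]
  obtain ⟨k, a, hd, ha⟩ : ∃ k a, d = 7*k + a ∧ a < 7 :=
    ⟨d/7, d%7, by omega, Nat.mod_lt _ (by norm_num)⟩
  subst hd
  have hexp : (7*k+a) * (7*k+a+1) = 7*(7*k*k + 2*k*a + k) + a*(a+1) := by ring
  rw [hexp] at h2
  interval_cases a <;> omega

lemma sub_eq_add' (x : PowerSeries F) : (1 : PowerSeries F) - x = 1 + x := by
  linear_combination (-x) * two_eq_zero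

end EulerCubeAux

/-- `eulerCubeCoeff m` is the coefficient of `q^m` in the formal power series
`∏_{n ≥ 1} (1 - q^n)^3` over `ℤ`, i.e. the cube of the Euler product
`(q;q)_∞ = ∏_{n ≥ 1} (1 - q^n)`.  Since every factor with index `n > m` is of the
form `1 + O(q^{m+1})` and so does not affect the coefficient of `q^m`, the infinite
product may be truncated at `n = m + 1`. -/
noncomputable def eulerCubeCoeff (m : ℕ) : ℤ :=
  PowerSeries.coeff m
    ((∏ n ∈ Finset.range (m + 1),
        ((1 : PowerSeries ℤ) - (PowerSeries.X : PowerSeries ℤ) ^ (n + 1))) ^ 3)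

theorem eulerCube_even_of_residue_mod_seven (m : ℕ)
    (hm : m % 7 = 2 ∨ m % 7 = 4 ∨ m % 7 = 5) :
    (2 : ℤ) ∣ eulerCubeCoeff m := by
  have hmap : ((eulerCubeCoeff m : ℤ) : ZMod 2) = 0 := by
    unfold eulerCubeCoeff
    have hcast : ∀ x : ℤ, ((x : ℤ) : ZMod 2) = (Int.castRingHom (ZMod 2)) x := fun _ => rfl
    rw [hcast, ← PowerSeries.coeff_map, map_pow, map_prod]
    simp only [map_sub, map_one, map_pow, PowerSeries.map_X]
    simp only [EulerCubeAux.sub_eq_add']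
    exact EulerCubeAux.key m (EulerCubeAux.T_ne_of_mod7 m hm)
  exact (ZMod.intCast_zmod_eq_zero_iff_dvd _ 2).mp hmap
end
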